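/- For u ∈ C^1(R^3; R^3) with bounded gradient, any r > 0, and q with 1 < q ≤ ∞, the function π(x) = ∫_{|z|≤2r} |u(x+z) − u(x)|^2 / |z|^3 dz satisfies ‖π‖_{L^q(R^3)} ≤ C_q r^2 ‖∇u‖_{L^{2q}(R^3)}^2 for a constant C_q depending only on q. -/

import Mathlib

open MeasureTheory Metric Real ENNReal NNReal Set

local notation "E3" => EuclideanSpace ℝ (Fin 3)

lemma kernel_bound : ∃ K : ℝ≥0, 0 < K ∧ ∀ R : ℝ, 0 < R →
    ∫⁻ z in closedBall (0 : E3) R, (‖z‖₊ : ℝ≥0∞)⁻¹ ∂volume ≤ K * ENNReal.ofReal (R ^ 2) := by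
  set vB : ℝ≥0∞ := volume (ball (0 : E3) 1) with hvB
  have hvBfin : vB < ∞ := measure_ball_lt_top
  refine ⟨vB.toNNReal * 2 + 1, by positivity, fun R hR => ?_⟩
  set μ := volume.restrict (closedBall (0 : E3) R) with hμ
  have hz0 : μ ({(0 : E3)} : Set E3) = 0 :=
    le_antisymm (le_trans (Measure.restrict_apply_le _ _) (by simp)) (zero_le)
  have h1 : ∫⁻ z, (‖z‖₊ : ℝ≥0∞)⁻¹ ∂μ = ∫⁻ z, ENNReal.ofReal (‖z‖⁻¹) ∂μ := by
    refine lintegral_congr_ae ?_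
    have : ∀ᵐ z ∂μ, z ∉ ({(0:E3)} : Set E3) := by
      rw [ae_iff]; simpa using hz0
    filter_upwards [this] with z hz
    have hzpos : 0 < ‖z‖ := by simpa [norm_pos_iff] using hz
    rw [ENNReal.ofReal_inv_of_pos hzpos, ofReal_norm, enorm_eq_nnnorm]
  -- layer cake
  have h2 : ∫⁻ z, ENNReal.ofReal (‖z‖⁻¹) ∂μ = ∫⁻ t in Ioi (0:ℝ), μ {a : E3 | t ≤ ‖a‖⁻¹} := by
    refine lintegral_eq_lintegral_meas_le μ (ae_of_all _ fun z => by positivity) ?_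
    exact (Measurable.inv (by fun_prop)).aemeasurable
  -- bound the distribution function
  have h3 : ∀ t ∈ Ioi (0:ℝ), μ {a : E3 | t ≤ ‖a‖⁻¹} ≤
      ENNReal.ofReal (min R t⁻¹ ^ 3) * vB := by
    intro t ht
    replace ht : 0 < t := ht
    rw [hμ, Measure.restrict_apply' measurableSet_closedBall]
    have hsub : {a : E3 | t ≤ ‖a‖⁻¹} ∩ closedBall 0 R ⊆ closedBall (0:E3) (min R t⁻¹) := by
      intro a ⟨ha1, ha2⟩
      rw [mem_closedBall_zero_iff]
      have ha1' : t ≤ ‖a‖⁻¹ := ha1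
      rcases eq_or_ne a 0 with rfl | ha0
      · simpa using le_min hR.le (by positivity : (0:ℝ) ≤ t⁻¹)
      · have hna : 0 < ‖a‖ := norm_pos_iff.2 ha0
        refine le_min (by simpa [mem_closedBall_zero_iff] using ha2) ?_
        rw [← inv_inv ‖a‖]
        exact inv_anti₀ ht ha1'
    refine le_trans (measure_mono hsub) ?_
    rw [Measure.addHaar_closedBall _ _ (le_min hR.le (inv_nonneg.2 ht.le))]
    simp [finrank_euclideanSpace_fin, hvB]
  have hRinv : (0:ℝ) < R⁻¹ := by positivity
  calc ∫⁻ z, (‖z‖₊ : ℝ≥0∞)⁻¹ ∂μ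
      = ∫⁻ t in Ioi (0:ℝ), μ {a : E3 | t ≤ ‖a‖⁻¹} := by rw [h1, h2]
    _ ≤ ∫⁻ t in Ioi (0:ℝ), ENNReal.ofReal (min R t⁻¹ ^ 3) * vB := by
        refine lintegral_mono_ae ?_
        filter_upwards [ae_restrict_mem measurableSet_Ioi] with t ht
        exact h3 t ht
    _ ≤ (∫⁻ t in Ioc (0:ℝ) R⁻¹, ENNReal.ofReal (min R t⁻¹ ^ 3) * vB)
        + ∫⁻ t in Ioi R⁻¹, ENNReal.ofReal (min R t⁻¹ ^ 3) * vB := by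
        refine le_trans (lintegral_mono_set ?_) (lintegral_union_le _ _ _)
        intro t ht
        rcases le_or_gt t R⁻¹ with h | h
        · exact Or.inl ⟨ht, h⟩
        · exact Or.inr h
    _ ≤ ENNReal.ofReal (R ^ 3) * vB * ENNReal.ofReal R⁻¹
        + ENNReal.ofReal (R ^ 2 / 2) * vB := by
        gcongr ?_ + ?_
        · calc ∫⁻ t in Ioc (0:ℝ) R⁻¹, ENNReal.ofReal (min R t⁻¹ ^ 3) * vB
              ≤ ∫⁻ _ in Ioc (0:ℝ) R⁻¹, ENNReal.ofReal (R ^ 3) * vB := by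
                refine lintegral_mono_ae (ae_restrict_of_forall_mem measurableSet_Ioc fun t ht => ?_)
                refine mul_le_mul' (ENNReal.ofReal_le_ofReal ?_) le_rfl
                exact pow_le_pow_left₀ (le_min hR.le (inv_nonneg.2 ht.1.le)) (min_le_left _ _) 3
            _ = ENNReal.ofReal (R ^ 3) * vB * ENNReal.ofReal R⁻¹ := by
                rw [setLIntegral_const, Real.volume_Ioc, sub_zero]
        · have hfeq : ∀ᵐ t ∂(volume.restrict (Ioi R⁻¹)),
              ENNReal.ofReal (min R t⁻¹ ^ 3) * vB ≤ ENNReal.ofReal (t ^ (-3:ℝ)) * vB := by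
            refine ae_restrict_of_forall_mem measurableSet_Ioi fun t ht => ?_
            have htpos : (0:ℝ) < t := lt_trans hRinv ht
            refine mul_le_mul' (ENNReal.ofReal_le_ofReal ?_) le_rfl
            have : t ^ (-3:ℝ) = (t⁻¹) ^ 3 := by
              rw [show (-3:ℝ) = -((3:ℕ):ℝ) by norm_num, Real.rpow_neg htpos.le,
                Real.rpow_natCast, inv_pow]
            rw [this]
            exact pow_le_pow_left₀ (le_min hR.le (inv_nonneg.2 htpos.le)) (min_le_right _ _) 3
          calc ∫⁻ t in Ioi R⁻¹, ENNReal.ofReal (min R t⁻¹ ^ 3) * vB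
              ≤ ∫⁻ t in Ioi R⁻¹, ENNReal.ofReal (t ^ (-3:ℝ)) * vB := lintegral_mono_ae hfeq
            _ = (∫⁻ t in Ioi R⁻¹, ENNReal.ofReal (t ^ (-3:ℝ))) * vB := by
                rw [lintegral_mul_const'' _ (by fun_prop)]
            _ = ENNReal.ofReal (R ^ 2 / 2) * vB := by
                congr 1
                rw [← ofReal_integral_eq_lintegral_ofReal
                  (integrableOn_Ioi_rpow_of_lt (by norm_num) hRinv)
                  (ae_restrict_of_forall_mem measurableSet_Ioi fun t ht =>
                    Real.rpow_nonneg (le_of_lt (lt_trans hRinv ht)) _)]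
                rw [integral_Ioi_rpow_of_lt (by norm_num) hRinv]
                have hri : R⁻¹ ^ (-2:ℝ) = R ^ 2 := by
                  rw [Real.rpow_neg (inv_nonneg.2 hR.le), Real.inv_rpow hR.le, inv_inv,
                    Real.rpow_two]
                norm_num [hri]
    _ ≤ ((vB.toNNReal * 2 + 1 : ℝ≥0) : ℝ≥0∞) * ENNReal.ofReal (R ^ 2) := by
        have e1 : ENNReal.ofReal (R ^ 3) * vB * ENNReal.ofReal R⁻¹
            = ENNReal.ofReal (R ^ 2) * vB := by
          rw [mul_right_comm, ← ENNReal.ofReal_mul (by positivity)]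
          congr 2
          field_simp
        have e2 : ENNReal.ofReal (R ^ 2 / 2) ≤ ENNReal.ofReal (R ^ 2) :=
          ENNReal.ofReal_le_ofReal (by linarith [sq_nonneg R])
        rw [e1]
        push_cast
        rw [ENNReal.coe_toNNReal hvBfin.ne]
        calc ENNReal.ofReal (R ^ 2) * vB + ENNReal.ofReal (R ^ 2 / 2) * vB
            ≤ ENNReal.ofReal (R ^ 2) * vB + ENNReal.ofReal (R ^ 2) * vB := by gcongr
          _ = vB * 2 * ENNReal.ofReal (R ^ 2) := by ring
          _ ≤ (vB * 2 + 1) * ENNReal.ofReal (R ^ 2) := by gcongr; exact le_self_add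

lemma minkowski_lintegral {α β : Type*} [MeasurableSpace α] [MeasurableSpace β]
    (μ : Measure α) [SigmaFinite μ] (ν : Measure β) [SFinite ν]
    (f : β → α → ℝ≥0∞) (hf : Measurable (Function.uncurry f))
    {p : ℝ} (hp : 1 < p) (c : ℝ≥0∞) (hc : c ≠ ∞)
    (hbdd : ∀ x, (∫⁻ y, f y x ∂ν) ≤ c) :
    (∫⁻ x, (∫⁻ y, f y x ∂ν) ^ p ∂μ) ^ (1/p) ≤ ∫⁻ y, (∫⁻ x, (f y x) ^ p ∂μ) ^ (1/p) ∂ν := by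
  have hp0 : 0 < p := lt_trans one_pos hp
  set q : ℝ := p / (p - 1) with hqdef
  have hpq : p.HolderConjugate q := Real.HolderConjugate.conjExponent hp
  have hmy : ∀ x, Measurable fun y => f y x := fun x =>
    hf.comp (measurable_id.prodMk measurable_const)
  have hmx : ∀ y, Measurable fun x => f y x := fun y =>
    hf.comp (measurable_const.prodMk measurable_id)
  set R := ∫⁻ y, (∫⁻ x, (f y x) ^ p ∂μ) ^ (1/p) ∂ν with hR
  rcases eq_or_ne R ∞ with hRtop | hRtop
  · rw [hRtop]; exact le_top
  set F : α → ℝ≥0∞ := fun x => ∫⁻ y, f y x ∂ν with hF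
  have hFmeas : Measurable F := hf.lintegral_prod_left
  set A : ℕ → ℝ≥0∞ := fun n => ∫⁻ x in spanningSets μ n, F x ^ p ∂μ with hA
  have hFpm : Measurable fun x => F x ^ p := hFmeas.pow measurable_const
  have hAfin : ∀ n, A n ≠ ∞ := by
    intro n
    have h1 : A n ≤ c ^ p * μ (spanningSets μ n) := by
      rw [hA, ← setLIntegral_const]
      refine setLIntegral_mono (by fun_prop) fun x _ => ?_
      exact ENNReal.rpow_le_rpow (hbdd x) hp0.le
    refine (lt_of_le_of_lt h1 ?_).ne
    exact ENNReal.mul_lt_top (ENNReal.rpow_lt_top_of_nonneg hp0.le hc)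
      (measure_spanningSets_lt_top μ n)
  have key : ∀ n, A n ≤ R * A n ^ (1/q) := by
    intro n
    set μn := μ.restrict (spanningSets μ n) with hμn
    have hmg : Measurable fun x => F x ^ (p - 1) := hFmeas.pow measurable_const
    have step1 : A n = ∫⁻ x, F x * F x ^ (p - 1) ∂μn := by
      refine lintegral_congr fun x => ?_
      have h2 := ENNReal.rpow_add_of_nonneg (x := F x) 1 (p-1) zero_le_one
        (by linarith : (0:ℝ) ≤ p - 1)
      rw [show (1:ℝ) + (p-1) = p by ring] at h2
      rw [h2, ENNReal.rpow_one]
    have step2 : ∫⁻ x, F x * F x ^ (p - 1) ∂μn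
        = ∫⁻ y, ∫⁻ x, f y x * F x ^ (p - 1) ∂μn ∂ν := by
      have h1 : ∀ x, F x * F x ^ (p - 1) = ∫⁻ y, f y x * F x ^ (p - 1) ∂ν := fun x =>
        (lintegral_mul_const'' _ (hmy x).aemeasurable).symm
      rw [lintegral_congr h1]
      exact lintegral_lintegral_swap
        ((hf.comp measurable_swap).mul ((hmg.comp measurable_fst))).aemeasurable
    have step3 : ∫⁻ y, ∫⁻ x, f y x * F x ^ (p - 1) ∂μn ∂ν
        ≤ ∫⁻ y, (∫⁻ x, f y x ^ p ∂μn) ^ (1/p) * A n ^ (1/q) ∂ν := by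
      refine lintegral_mono fun y => ?_
      have hold := ENNReal.lintegral_mul_le_Lp_mul_Lq μn hpq (hmx y).aemeasurable hmg.aemeasurable
      refine le_trans hold ?_
      refine mul_le_mul' le_rfl ?_
      refine le_of_eq ?_
      congr 1
      refine lintegral_congr fun x => ?_
      rw [← ENNReal.rpow_mul, hpq.sub_one_mul_conj]
    have step4 : ∫⁻ y, (∫⁻ x, f y x ^ p ∂μn) ^ (1/p) * A n ^ (1/q) ∂ν
        ≤ R * A n ^ (1/q) := by
      have hym : Measurable fun y => (∫⁻ x, f y x ^ p ∂μn) ^ (1/p) :=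
        ((hf.pow measurable_const).lintegral_prod_right').pow measurable_const
      rw [lintegral_mul_const'' _ hym.aemeasurable]
      refine mul_le_mul' ?_ le_rfl
      rw [hR]
      refine lintegral_mono fun y => ?_
      exact ENNReal.rpow_le_rpow (lintegral_mono' Measure.restrict_le_self le_rfl)
        (by positivity)
    calc A n = ∫⁻ x, F x * F x ^ (p - 1) ∂μn := step1
      _ = ∫⁻ y, ∫⁻ x, f y x * F x ^ (p - 1) ∂μn ∂ν := step2
      _ ≤ ∫⁻ y, (∫⁻ x, f y x ^ p ∂μn) ^ (1/p) * A n ^ (1/q) ∂ν := step3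
      _ ≤ R * A n ^ (1/q) := step4
  have hAle : ∀ n, A n ^ (1/p) ≤ R := by
    intro n
    rcases eq_or_ne (A n) 0 with h0 | h0
    · rw [h0, ENNReal.zero_rpow_of_pos (by positivity)]; exact zero_le
    have hq0 : 0 < 1/q := one_div_pos.2 hpq.symm.pos
    have hsum : 1/p + 1/q = 1 := by
      rw [one_div, one_div]; exact hpq.inv_add_inv_eq_one
    have hcancel : A n ^ (1/p) * A n ^ (1/q) ≤ R * A n ^ (1/q) := by
      rw [← ENNReal.rpow_add_of_nonneg _ _ (by positivity) hq0.le, hsum, ENNReal.rpow_one]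
      exact key n
    have hne0 : A n ^ (1/q) ≠ 0 := by
      simp only [ne_eq, ENNReal.rpow_eq_zero_iff, not_or]
      constructor
      · rintro ⟨h, -⟩; exact h0 h
      · rintro ⟨h, -⟩; exact hAfin n h
    have hnetop : A n ^ (1/q) ≠ ∞ := by
      refine (ENNReal.rpow_lt_top_of_nonneg hq0.le (hAfin n)).ne
    exact (ENNReal.mul_le_mul_iff_left hne0 hnetop).1 hcancel
  -- combine via monotone convergence
  have hsup : ∫⁻ x, F x ^ p ∂μ = ⨆ n, A n := by
    have hpt : ∀ x, F x ^ p = ⨆ n, (spanningSets μ n).indicator (fun x => F x ^ p) x := by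
      intro x
      refine le_antisymm ?_ (iSup_le fun n => Set.indicator_le_self _ _ x)
      obtain ⟨n, hn⟩ : ∃ n, x ∈ spanningSets μ n := by
        have := iUnion_spanningSets μ
        have hx : x ∈ ⋃ n, spanningSets μ n := by rw [this]; trivial
        exact Set.mem_iUnion.1 hx
      exact le_iSup_of_le n (by rw [Set.indicator_of_mem hn])
    calc ∫⁻ x, F x ^ p ∂μ
        = ∫⁻ x, ⨆ n, (spanningSets μ n).indicator (fun x => F x ^ p) x ∂μ :=
          lintegral_congr hpt
      _ = ⨆ n, ∫⁻ x, (spanningSets μ n).indicator (fun x => F x ^ p) x ∂μ := by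
          refine lintegral_iSup (fun n => hFpm.indicator (measurableSet_spanningSets μ n)) ?_
          intro i j hij x
          exact Set.indicator_le_indicator_of_subset (monotone_spanningSets μ hij)
            (fun a => zero_le) x
      _ = ⨆ n, A n := by
          refine iSup_congr fun n => ?_
          rw [lintegral_indicator (measurableSet_spanningSets μ n)]
  have : (∫⁻ x, F x ^ p ∂μ) ≤ R ^ p := by
    rw [hsup]
    refine iSup_le fun n => ?_
    have := ENNReal.rpow_le_rpow (hAle n) hp0.le
    rwa [← ENNReal.rpow_mul, one_div_mul_cancel hp0.ne', ENNReal.rpow_one] at this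
  show (∫⁻ x, F x ^ p ∂μ) ^ (1/p) ≤ R
  calc (∫⁻ x, F x ^ p ∂μ) ^ (1/p) ≤ (R ^ p) ^ (1/p) :=
        ENNReal.rpow_le_rpow this (by positivity)
    _ = R := by rw [← ENNReal.rpow_mul, mul_one_div_cancel hp0.ne', ENNReal.rpow_one]

lemma pointwise_bound (u : E3 → E3) (hu : ContDiff ℝ 1 u) (x z : E3) :
    ENNReal.ofReal (‖u (x + z) - u x‖ ^ 2 / ‖z‖ ^ 3) ≤
      (‖z‖₊ : ℝ≥0∞)⁻¹ *
        ∫⁻ t in Icc (0:ℝ) 1, (ENNReal.ofReal ‖fderiv ℝ u (x + t • z)‖) ^ 2 := by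
  rcases eq_or_ne z 0 with rfl | hz
  · simp
  set g : ℝ → ℝ := fun t => ‖fderiv ℝ u (x + t • z)‖ with hg
  have hgc : Continuous g := ((hu.continuous_fderiv one_ne_zero).comp
    (continuous_const.add (continuous_id.smul continuous_const))).norm
  have hDc : Continuous fun t : ℝ => (fderiv ℝ u (x + t • z)) z := by
    refine Continuous.clm_apply ?_ continuous_const
    exact (hu.continuous_fderiv one_ne_zero).comp
      (continuous_const.add (continuous_id.smul continuous_const))
  have hderiv : ∀ t : ℝ, HasDerivAt (fun s : ℝ => u (x + s • z))
      ((fderiv ℝ u (x + t • z)) z) t := by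
    intro t
    have h1 : HasDerivAt (fun s : ℝ => x + s • z) z t := by
      simpa using ((hasDerivAt_id t).smul_const z).const_add x
    have h2 : HasFDerivAt u (fderiv ℝ u (x + t • z)) (x + t • z) :=
      (hu.differentiable one_ne_zero (x + t • z)).hasFDerivAt
    exact h2.comp_hasDerivAt t h1
  have heq : u (x + z) - u x = ∫ t in (0:ℝ)..1, (fderiv ℝ u (x + t • z)) z := by
    have h := intervalIntegral.integral_eq_sub_of_hasDerivAt
      (fun t _ => hderiv t) (hDc.intervalIntegrable 0 1)
    rw [h]
    norm_num
  set J : ℝ := ∫ t in (0:ℝ)..1, g t with hJdef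
  have hnorm : ‖u (x + z) - u x‖ ≤ J * ‖z‖ := by
    rw [heq]
    refine le_trans (intervalIntegral.norm_integral_le_integral_norm zero_le_one) ?_
    rw [hJdef, ← intervalIntegral.integral_mul_const]
    refine intervalIntegral.integral_mono_on zero_le_one
      (hDc.norm.intervalIntegrable 0 1) ((hgc.mul continuous_const).intervalIntegrable 0 1)
      fun t _ => ?_
    exact ContinuousLinearMap.le_opNorm _ z
  set T : ℝ≥0∞ := ∫⁻ t in Icc (0:ℝ) 1, ENNReal.ofReal (g t) with hT
  set S : ℝ≥0∞ := ∫⁻ t in Icc (0:ℝ) 1, (ENNReal.ofReal (g t)) ^ 2 with hS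
  have hJT : ENNReal.ofReal J ≤ T := by
    rw [hJdef, intervalIntegral.integral_of_le zero_le_one,
      ofReal_integral_eq_lintegral_ofReal
        ((hgc.integrableOn_Icc).mono_set Ioc_subset_Icc_self)
        (ae_of_all _ fun t => norm_nonneg _)]
    exact lintegral_mono_set Ioc_subset_Icc_self
  have hCS : T ^ 2 ≤ S := by
    have h2 : (2:ℝ).HolderConjugate 2 := Real.HolderConjugate.two_two
    have := ENNReal.lintegral_mul_le_Lp_mul_Lq (volume.restrict (Icc (0:ℝ) 1)) h2
      (by fun_prop : AEMeasurable (fun t => ENNReal.ofReal (g t)) _)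
      (aemeasurable_const (b := (1:ℝ≥0∞)))
    simp only [mul_one, Pi.mul_apply, Pi.one_apply] at this
    have hvol : (volume.restrict (Icc (0:ℝ) 1)) Set.univ = 1 := by
      simp [Real.volume_Icc]
    simp only [ENNReal.one_rpow] at this
    rw [lintegral_one, hvol, ENNReal.one_rpow, mul_one] at this
    have h4 : ∫⁻ t in Icc (0:ℝ) 1, ENNReal.ofReal (g t) ^ (2:ℝ) = S := by
      rw [hS]
      refine lintegral_congr fun t => ?_
      rw [show (2:ℝ) = ((2:ℕ):ℝ) by norm_num, ENNReal.rpow_natCast]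
    rw [h4] at this
    calc T ^ 2 ≤ (S ^ (1/2:ℝ)) ^ 2 := pow_le_pow_left₀ (zero_le) this 2
      _ = S := by
          rw [← ENNReal.rpow_natCast (S ^ (1/2:ℝ)) 2, ← ENNReal.rpow_mul]
          norm_num
  have hJ0 : 0 ≤ J := intervalIntegral.integral_nonneg zero_le_one fun t _ => norm_nonneg _
  have hd : (‖u (x + z) - u x‖₊ : ℝ≥0∞) ≤ T * ‖z‖₊ := by
    have h5 := ENNReal.ofReal_le_ofReal hnorm
    rw [ofReal_norm] at h5
    refine le_trans h5 ?_
    rw [ENNReal.ofReal_mul hJ0]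
    exact mul_le_mul' hJT (le_of_eq (ofReal_norm z))
  have hzpos : (0:ℝ) < ‖z‖ := norm_pos_iff.2 hz
  have ha0 : (‖z‖₊ : ℝ≥0∞) ≠ 0 := by simpa using hz
  have hatop : (‖z‖₊ : ℝ≥0∞) ≠ ∞ := ENNReal.coe_ne_top
  calc ENNReal.ofReal (‖u (x + z) - u x‖ ^ 2 / ‖z‖ ^ 3)
      = (‖u (x + z) - u x‖₊ : ℝ≥0∞) ^ 2 / (‖z‖₊ : ℝ≥0∞) ^ 3 := by
        rw [ENNReal.ofReal_div_of_pos (by positivity), ENNReal.ofReal_pow (norm_nonneg _),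
          ENNReal.ofReal_pow (norm_nonneg _), ofReal_norm,
          ofReal_norm, enorm_eq_nnnorm, enorm_eq_nnnorm]
    _ ≤ (T * ‖z‖₊) ^ 2 / (‖z‖₊ : ℝ≥0∞) ^ 3 := by gcongr
    _ = T ^ 2 / (‖z‖₊ : ℝ≥0∞) := by
        have h6 : ((‖z‖₊ : ℝ≥0∞)) ^ 3 = ‖z‖₊ ^ 2 * ‖z‖₊ := by ring
        rw [mul_pow, h6, mul_comm (T ^ 2) (((‖z‖₊ : ℝ≥0∞)) ^ 2),
          ENNReal.mul_div_mul_left _ _ (pow_ne_zero 2 ha0) (by simp [hatop])]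
    _ ≤ S / (‖z‖₊ : ℝ≥0∞) := by gcongr
    _ = (‖z‖₊ : ℝ≥0∞)⁻¹ * S := by rw [div_eq_mul_inv, mul_comm]

theorem stmt_12 (q : ℝ≥0∞) (hq : 1 < q) :
    ∃ C : ℝ≥0, 0 < C ∧
      ∀ (u : EuclideanSpace ℝ (Fin 3) → EuclideanSpace ℝ (Fin 3)) (r M : ℝ),
        0 < r → ContDiff ℝ 1 u → (∀ x, ‖fderiv ℝ u x‖ ≤ M) →
        eLpNorm (fun x => ∫ z in closedBall (0 : EuclideanSpace ℝ (Fin 3)) (2 * r),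
            ‖u (x + z) - u x‖ ^ 2 / ‖z‖ ^ 3) q volume
          ≤ (C : ℝ≥0∞) * ENNReal.ofReal (r ^ 2) *
              eLpNorm (fun x => ‖fderiv ℝ u x‖) (2 * q) volume ^ 2 := by
  obtain ⟨K, hK, hker⟩ := kernel_bound
  refine ⟨4 * K, by positivity, ?_⟩
  intro u r M hr hu hM
  set B := closedBall (0 : E3) (2 * r) with hB
  set g : E3 → ℝ := fun y => ‖fderiv ℝ u y‖ with hgdef
  have hgc : Continuous g := (hu.continuous_fderiv one_ne_zero).norm
  set G : E3 → ℝ≥0∞ := fun y => ENNReal.ofReal (g y) with hGdef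
  have hGc : Continuous G := ENNReal.continuous_ofReal.comp hgc
  have hGmeas : Measurable G := hGc.measurable
  set pfun : E3 → ℝ := fun x => ∫ z in B, ‖u (x + z) - u x‖ ^ 2 / ‖z‖ ^ 3 with hπdef
  have hpfun0 : ∀ x, 0 ≤ pfun x := fun x => integral_nonneg fun z => by positivity
  -- step B + pointwise
  have hstep : ∀ x, ENNReal.ofReal (pfun x) ≤
      ∫⁻ z in B, (‖z‖₊ : ℝ≥0∞)⁻¹ * ∫⁻ t in Icc (0:ℝ) 1, (G (x + t • z)) ^ 2 ∂volume := by
    intro x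
    have h1 : ENNReal.ofReal (pfun x) ≤
        ∫⁻ z in B, ENNReal.ofReal (‖u (x + z) - u x‖ ^ 2 / ‖z‖ ^ 3) ∂volume := by
      by_cases hInt : IntegrableOn (fun z => ‖u (x + z) - u x‖ ^ 2 / ‖z‖ ^ 3) B volume
      · exact le_of_eq (ofReal_integral_eq_lintegral_ofReal hInt
          (ae_of_all _ fun z => by positivity))
      · rw [hπdef]
        simp only [integral_undef hInt, ENNReal.ofReal_zero]
        exact zero_le
    refine le_trans h1 (lintegral_mono fun z => ?_)
    exact pointwise_bound u hu x z
  -- kernel integral bound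
  have hkerB : ∫⁻ z in B, (‖z‖₊ : ℝ≥0∞)⁻¹ ∂volume ≤ (4 * K : ℝ≥0∞) * ENNReal.ofReal (r ^ 2) := by
    refine le_trans (hker (2 * r) (by positivity)) ?_
    rw [show (2*r)^2 = 4 * r^2 by ring, ENNReal.ofReal_mul (by norm_num)]
    rw [show ENNReal.ofReal (4:ℝ) = (4:ℝ≥0∞) by norm_num [ENNReal.ofReal_ofNat]]
    ring_nf
    exact le_rfl
  -- uniform bound machine
  have hmain : ∀ D : ℝ≥0∞, (∀ y, G y ≤ D) → ∀ x,
      (∫⁻ z in B, (‖z‖₊ : ℝ≥0∞)⁻¹ * ∫⁻ t in Icc (0:ℝ) 1, (G (x + t • z)) ^ 2 ∂volume ∂volume)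
        ≤ (4 * K : ℝ≥0∞) * ENNReal.ofReal (r ^ 2) * D ^ 2 := by
    intro D hD x
    have hinner : ∀ z : E3, (∫⁻ t in Icc (0:ℝ) 1, (G (x + t • z)) ^ 2 ∂volume) ≤ D ^ 2 := by
      intro z
      calc ∫⁻ t in Icc (0:ℝ) 1, (G (x + t • z)) ^ 2 ∂volume
          ≤ ∫⁻ _ in Icc (0:ℝ) 1, D ^ 2 ∂volume :=
            lintegral_mono fun t => pow_le_pow_left₀ (zero_le) (hD _) 2
        _ = D ^ 2 := by rw [setLIntegral_const]; simp [Real.volume_Icc]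
    calc ∫⁻ z in B, (‖z‖₊ : ℝ≥0∞)⁻¹ * ∫⁻ t in Icc (0:ℝ) 1, (G (x + t • z)) ^ 2 ∂volume ∂volume
        ≤ ∫⁻ z in B, (‖z‖₊ : ℝ≥0∞)⁻¹ * D ^ 2 ∂volume :=
          lintegral_mono fun z => mul_le_mul' le_rfl (hinner z)
      _ = (∫⁻ z in B, (‖z‖₊ : ℝ≥0∞)⁻¹ ∂volume) * D ^ 2 :=
          lintegral_mul_const'' _ (by fun_prop)
      _ ≤ (4 * K : ℝ≥0∞) * ENNReal.ofReal (r ^ 2) * D ^ 2 := mul_le_mul' hkerB le_rfl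
  rcases eq_or_ne q ∞ with rfl | hqtop
  · -- q = ∞
    rw [show (2 * ∞ : ℝ≥0∞) = ∞ by simp, eLpNorm_exponent_top, eLpNorm_exponent_top]
    set S := eLpNormEssSup (fun x => ‖fderiv ℝ u x‖) volume with hS
    have hSG : S = essSup G volume := by
      rw [hS, eLpNormEssSup]
      congr 1
      funext w
      exact Real.enorm_eq_ofReal (norm_nonneg _)
    have hGS : ∀ y, G y ≤ S := by
      intro y
      by_contra hc
      push_neg at hc
      have hU : IsOpen {w : E3 | S < G w} := isOpen_lt continuous_const hGc
      have hpos : volume {w : E3 | S < G w} ≠ 0 := (hU.measure_pos volume ⟨y, hc⟩).ne'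
      have hae : ∀ᵐ w ∂(volume : Measure E3), G w ≤ S := by
        rw [hSG]; exact ae_le_essSup G
      rw [ae_iff] at hae
      simp only [not_le] at hae
      exact hpos hae
    refine le_trans ?_ (le_of_eq rfl)
    have hbd : ∀ x, (‖pfun x‖₊ : ℝ≥0∞) ≤ ↑(4 * K) * ENNReal.ofReal (r ^ 2) * S ^ 2 := by
      intro x
      rw [← enorm_eq_nnnorm, Real.enorm_eq_ofReal (hpfun0 x)]
      refine le_trans (hstep x) (le_trans (hmain S hGS x) (le_of_eq ?_))
      push_cast
      ring
    exact essSup_le_of_ae_le _ (ae_of_all _ hbd)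
  -- q < ∞
  have hq0 : q ≠ 0 := (lt_trans zero_lt_one hq).ne'
  set p : ℝ := q.toReal with hpdef
  have hp1 : 1 < p := by
    have h := (ENNReal.toReal_lt_toReal (by simp) hqtop).2 hq
    simpa using h
  have hp0 : (0:ℝ) < p := lt_trans one_pos hp1
  have hCne : ((4 * K : ℝ≥0) : ℝ≥0∞) * ENNReal.ofReal (r ^ 2) ≠ 0 := by
    refine mul_ne_zero ?_ ?_
    · simp [hK.ne']
    · simp [ENNReal.ofReal_eq_zero, not_le]
      positivity
  rcases eq_or_ne (eLpNorm (fun x => ‖fderiv ℝ u x‖) (2 * q) volume) ∞ with hNtop | hNtop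
  · rw [hNtop]
    rw [show (⊤:ℝ≥0∞)^2 = ⊤ by simp, ENNReal.mul_top hCne]
    exact le_top
  set ν : Measure (E3 × ℝ) :=
    (volume.restrict B).prod (volume.restrict (Icc (0:ℝ) 1)) with hν
  set f : (E3 × ℝ) → E3 → ℝ≥0∞ :=
    fun w x => (‖w.1‖₊ : ℝ≥0∞)⁻¹ * (G (x + w.2 • w.1)) ^ 2 with hfdef
  have hfm : Measurable (Function.uncurry f) := by
    apply Measurable.mul
    · exact (measurable_fst.fst.nnnorm.coe_nnreal_ennreal).inv
    · refine (hGmeas.comp ?_).pow_const 2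
      exact measurable_snd.add (measurable_fst.snd.smul measurable_fst.fst)
  have hprod : ∀ x, (∫⁻ w, f w x ∂ν) =
      ∫⁻ z in B, (‖z‖₊ : ℝ≥0∞)⁻¹ * ∫⁻ t in Icc (0:ℝ) 1, (G (x + t • z)) ^ 2 ∂volume ∂volume := by
    intro x
    rw [hν, lintegral_prod _ (by exact (hfm.comp (measurable_id.prodMk measurable_const)).aemeasurable)]
    refine lintegral_congr fun z => ?_
    simp only [hfdef]
    rw [lintegral_const_mul'' _ (by fun_prop)]
  set Np : ℝ≥0∞ := (∫⁻ y, G y ^ (2 * p) ∂volume) ^ (1/p) with hNp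
  have hNval : ∀ w : E3 × ℝ, (∫⁻ x, f w x ^ p ∂volume) ^ (1/p) = (‖w.1‖₊ : ℝ≥0∞)⁻¹ * Np := by
    intro w
    have h1 : ∀ x, f w x ^ p = ((‖w.1‖₊ : ℝ≥0∞)⁻¹) ^ p * G (x + w.2 • w.1) ^ (2 * p) := by
      intro x
      rw [hfdef, ENNReal.mul_rpow_of_nonneg _ _ hp0.le]
      congr 1
      rw [← ENNReal.rpow_natCast (G _) 2, ← ENNReal.rpow_mul]
      norm_num
    simp_rw [h1]
    rw [lintegral_const_mul'' _ (by fun_prop),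
      lintegral_add_right_eq_self (fun y => G y ^ (2 * p)) (w.2 • w.1),
      ENNReal.mul_rpow_of_nonneg _ _ (by positivity : (0:ℝ) ≤ 1/p),
      ← ENNReal.rpow_mul, mul_one_div_cancel hp0.ne', ENNReal.rpow_one, hNp]
  have hRHSeval : ∫⁻ w, (‖w.1‖₊ : ℝ≥0∞)⁻¹ * Np ∂ν
      = (∫⁻ z in B, (‖z‖₊ : ℝ≥0∞)⁻¹ ∂volume) * Np := by
    rw [hν, lintegral_prod _ (by fun_prop)]
    have h1 : ∀ z : E3, (∫⁻ _ in Icc (0:ℝ) 1, (‖z‖₊ : ℝ≥0∞)⁻¹ * Np ∂volume)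
        = (‖z‖₊ : ℝ≥0∞)⁻¹ * Np := by
      intro z
      rw [setLIntegral_const]
      simp [Real.volume_Icc]
    simp_rw [h1]
    rw [lintegral_mul_const'' _ (by fun_prop)]
  -- eLpNorm identity
  have h2q0 : (2 * q) ≠ 0 := by simp [hq0]
  have h2qtop : (2 * q) ≠ ∞ := ENNReal.mul_ne_top (by simp) hqtop
  have h2qReal : (2 * q).toReal = 2 * p := by
    rw [ENNReal.toReal_mul, hpdef]
    norm_num
  have hsn : eLpNorm (fun x => ‖fderiv ℝ u x‖) (2 * q) volume
      = (∫⁻ y, G y ^ (2 * p) ∂volume) ^ (1/(2 * p)) := by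
    rw [eLpNorm_eq_lintegral_rpow_enorm_toReal h2q0 h2qtop, h2qReal]
    congr 1
    refine lintegral_congr fun y => ?_
    rw [Real.enorm_eq_ofReal (norm_nonneg _)]
  have hsn2 : eLpNorm (fun x => ‖fderiv ℝ u x‖) (2 * q) volume ^ 2 = Np := by
    rw [hsn, hNp, ← ENNReal.rpow_natCast _ 2, ← ENNReal.rpow_mul]
    congr 1
    push_cast
    field_simp
  -- boundedness for Minkowski
  set Mp : ℝ≥0∞ := ENNReal.ofReal (max M 0) with hMp
  have hGM : ∀ y, G y ≤ Mp := fun y =>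
    ENNReal.ofReal_le_ofReal (le_max_of_le_left (hM y))
  set c : ℝ≥0∞ := (4 * K : ℝ≥0∞) * ENNReal.ofReal (r ^ 2) * Mp ^ 2 with hc
  have hcne : c ≠ ∞ := by
    rw [hc, hMp]
    refine ENNReal.mul_ne_top (ENNReal.mul_ne_top ?_ ENNReal.ofReal_ne_top) ?_
    · exact ENNReal.mul_ne_top (by simp) ENNReal.coe_ne_top
    · exact pow_ne_top ENNReal.ofReal_ne_top
  have hbddF : ∀ x, (∫⁻ w, f w x ∂ν) ≤ c := by
    intro x
    rw [hprod x]
    exact hmain Mp hGM x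
  have hmink := minkowski_lintegral volume ν f hfm hp1 c hcne hbddF
  -- conclude
  have hLHS : eLpNorm pfun q volume ≤ (∫⁻ x, (∫⁻ w, f w x ∂ν) ^ p ∂volume) ^ (1/p) := by
    rw [eLpNorm_eq_lintegral_rpow_enorm_toReal hq0 hqtop]
    refine ENNReal.rpow_le_rpow ?_ (by positivity)
    refine lintegral_mono fun x => ?_
    refine ENNReal.rpow_le_rpow ?_ hp0.le
    rw [Real.enorm_eq_ofReal (hpfun0 x)]
    exact le_trans (hstep x) (le_of_eq (hprod x).symm)
  calc eLpNorm pfun q volume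
      ≤ (∫⁻ x, (∫⁻ w, f w x ∂ν) ^ p ∂volume) ^ (1/p) := hLHS
    _ ≤ ∫⁻ w, (∫⁻ x, f w x ^ p ∂volume) ^ (1/p) ∂ν := hmink
    _ = (∫⁻ z in B, (‖z‖₊ : ℝ≥0∞)⁻¹ ∂volume) * Np := by
        rw [← hRHSeval]
        exact lintegral_congr fun w => hNval w
    _ ≤ (4 * K : ℝ≥0∞) * ENNReal.ofReal (r ^ 2) * Np := mul_le_mul' hkerB le_rfl
    _ = ↑(4 * K) * ENNReal.ofReal (r ^ 2)
        * eLpNorm (fun x => ‖fderiv ℝ u x‖) (2 * q) volume ^ 2 := by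
        rw [hsn2]
        push_cast
        ring
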